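/- Let h ∈ ℂ with h ∉ 2πi·ℚ, q := exp(h), and let p, r, ℓ₀, m₀ ∈ ℂ satisfy, for all k ∈ ℤ: q^{2m₀+k} ≠ −1, q^{2ℓ₀+2k} ≠ 1, q^{4ℓ₀+2k} ≠ 1, and moreover q^{2p+2ℓ₀+2k} ≠ 1, q^{2p−2ℓ₀+2k} ≠ 1, q^{2ℓ₀+2r+2k} ≠ 1, q^{2ℓ₀−2r+2k} ≠ 1, q^{2ℓ₀+2m₀+2k} ≠ 1, and q^{2ℓ₀−2m₀+2k} ≠ 1. Then the generic Gelfand–Tsetlin representation V^{p,r}_{ℓ₀,m₀} is irreducible: every ℂ-linear subspace of V = ⊕_{(j,k)∈ℤ×ℤ} ℂ·e_{j,k} invariant under I₂₁, I₃₂ and I₄₃ is either 0 or all of V. -/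

import Mathlib

/-- `q^b := exp(h·b)`. -/
noncomputable def qpow (h b : ℂ) : ℂ := Complex.exp (h * b)

/-- the q-number `[b] := (q^b − q^{−b})/(q − q^{−1})` where `q = exp h`. -/
noncomputable def qnum (h b : ℂ) : ℂ :=
  (Complex.exp (h * b) - Complex.exp (-(h * b))) / (Complex.exp h - Complex.exp (-h))

/-- `a_{ℓ,m} := [ℓ+m+1][ℓ−m]/((q^m+q^{−m})(q^{m+1}+q^{−m−1}))`. -/
noncomputable def coefA (h ℓ m : ℂ) : ℂ :=
  qnum h (ℓ + m + 1) * qnum h (ℓ - m) /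
    ((qpow h m + qpow h (-m)) * (qpow h (m + 1) + qpow h (-(m + 1))))

/-- `b_{ℓ,m} := [p+ℓ+2][p−ℓ][ℓ+r+1][ℓ−r+1][ℓ+m+1]/([ℓ+1]²[2ℓ+1][2ℓ+3])`. -/
noncomputable def coefB (h p r ℓ m : ℂ) : ℂ :=
  qnum h (p + ℓ + 2) * qnum h (p - ℓ) * qnum h (ℓ + r + 1) * qnum h (ℓ - r + 1) *
      qnum h (ℓ + m + 1) /
    (qnum h (ℓ + 1) ^ 2 * qnum h (2 * ℓ + 1) * qnum h (2 * ℓ + 3))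

/-- `c_{ℓ,m} := [p+1][r][m]/([ℓ+1][ℓ])`. -/
noncomputable def coefC (h p r ℓ m : ℂ) : ℂ :=
  qnum h (p + 1) * qnum h r * qnum h m / (qnum h (ℓ + 1) * qnum h ℓ)


namespace Stmt17

variable (h : ℂ)

lemma exp_int_ne_one (hh : ∀ r' : ℚ, h ≠ 2 * Real.pi * Complex.I * r') :
    ∀ n : ℤ, n ≠ 0 → Complex.exp (h * n) ≠ 1 := by
  intro n hn he
  rw [Complex.exp_eq_one_iff] at he
  obtain ⟨m, hm⟩ := he
  apply hh ((m : ℚ) / (n : ℚ))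
  have hn' : (n : ℂ) ≠ 0 := Int.cast_ne_zero.mpr hn
  push_cast
  rw [mul_div_assoc', eq_div_iff hn']
  linear_combination hm

lemma denom_ne (hh : ∀ r' : ℚ, h ≠ 2 * Real.pi * Complex.I * r') :
    Complex.exp h - Complex.exp (-h) ≠ 0 := by
  have h2 := exp_int_ne_one h hh 2 (by norm_num)
  intro he
  apply h2
  rw [sub_eq_zero] at he
  have : Complex.exp h * Complex.exp h = Complex.exp (-h) * Complex.exp h := by rw [he]
  rw [← Complex.exp_add, ← Complex.exp_add] at this
  simpa [show h + h = h * 2 by ring] using this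

lemma qnum_ne_zero (hh : ∀ r' : ℚ, h ≠ 2 * Real.pi * Complex.I * r')
    (b : ℂ) (hb : Complex.exp (h * (2 * b)) ≠ 1) : qnum h b ≠ 0 := by
  apply div_ne_zero _ (denom_ne h hh)
  intro he
  apply hb
  rw [sub_eq_zero] at he
  have : Complex.exp (h * b) * Complex.exp (h * b)
      = Complex.exp (-(h * b)) * Complex.exp (h * b) := by rw [he]
  rw [← Complex.exp_add, ← Complex.exp_add] at this
  simpa [show h * b + h * b = h * (2 * b) by ring] using this

lemma qnum_ne (hh : ∀ r' : ℚ, h ≠ 2 * Real.pi * Complex.I * r')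
    (a b : ℂ) (h1 : Complex.exp (h * (a - b)) ≠ 1)
    (h2 : Complex.exp (h * (a + b)) ≠ -1) : qnum h a ≠ qnum h b := by
  intro he
  unfold qnum at he
  rw [div_eq_div_iff (denom_ne h hh) (denom_ne h hh)] at he
  set x := Complex.exp (h * a) with hx
  set y := Complex.exp (h * b) with hy
  have hxy : x * y = Complex.exp (h * (a + b)) := by
    rw [hx, hy, ← Complex.exp_add]; ring_nf
  have hxi : Complex.exp (-(h * a)) = x⁻¹ := by rw [hx, ← Complex.exp_neg]
  have hyi : Complex.exp (-(h * b)) = y⁻¹ := by rw [hy, ← Complex.exp_neg]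
  have hx0 : x ≠ 0 := Complex.exp_ne_zero _
  have hy0 : y ≠ 0 := Complex.exp_ne_zero _
  rw [hxi, hyi] at he
  have key : (x - y) * (x * y + 1) = 0 := by
    have := mul_right_cancel₀ (denom_ne h hh) he
    field_simp at this
    linear_combination this
  rcases mul_eq_zero.mp key with hk | hk
  · apply h1
    have hxy2 : x = Complex.exp (h * (a - b)) * y := by
      rw [hx, hy, ← Complex.exp_add]; ring_nf
    rw [sub_eq_zero] at hk
    rw [hxy2] at hk
    field_simp at hk
    exact hk
  · apply h2
    rw [← hxy]
    linear_combination hk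

lemma cosh_ne_zero (b : ℂ) (hb : Complex.exp (h * (2 * b)) ≠ -1) :
    Complex.exp (h * b) + Complex.exp (-(h * b)) ≠ 0 := by
  intro he
  apply hb
  have h0 : Complex.exp (h * b) ≠ 0 := Complex.exp_ne_zero _
  have : Complex.exp (h * b) * Complex.exp (h * b)
      = -(Complex.exp (-(h * b)) * Complex.exp (h * b)) := by
    rw [eq_neg_iff_add_eq_zero]; linear_combination Complex.exp (h * b) * he
  rw [← Complex.exp_add, ← Complex.exp_add] at this
  rw [show h * b + h * b = h * (2 * b) by ring] at this
  rw [show -(h * b) + h * b = 0 by ring, Complex.exp_zero] at this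
  simpa using this

/-- injectivity of `ℓ ↦ [ℓ+m+1][ℓ-m]` -/
lemma qnum_prod_ne (hh : ∀ r' : ℚ, h ≠ 2 * Real.pi * Complex.I * r')
    (a b m : ℂ) (h1 : Complex.exp (h * (2 * a - 2 * b)) ≠ 1)
    (h2 : Complex.exp (h * (2 * a + 2 * b + 2)) ≠ 1) :
    qnum h (a + m + 1) * qnum h (a - m) ≠ qnum h (b + m + 1) * qnum h (b - m) := by
  intro he
  set x := Complex.exp (h * a) with hx
  set y := Complex.exp (h * b) with hy
  set u := Complex.exp (h * m) with hu
  set w := Complex.exp h with hw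
  have hd0 : w - w⁻¹ ≠ 0 := by rw [hw, ← Complex.exp_neg]; exact denom_ne h hh
  have hw21 : w ^ 2 - 1 ≠ 0 := by
    rw [hw, sub_ne_zero, sq, ← Complex.exp_add]
    simpa [show h + h = h * (2 : ℤ) by push_cast; ring] using exp_int_ne_one h hh 2 (by norm_num)
  have hx0 : x ≠ 0 := Complex.exp_ne_zero _
  have hy0 : y ≠ 0 := Complex.exp_ne_zero _
  have hu0 : u ≠ 0 := Complex.exp_ne_zero _
  have hw0 : w ≠ 0 := Complex.exp_ne_zero _
  have e1 : Complex.exp (h * (a + m + 1)) = x * u * w := by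
    rw [hx, hu, hw, ← Complex.exp_add, ← Complex.exp_add]; congr 1; ring
  have e2 : Complex.exp (h * (a - m)) = x * u⁻¹ := by
    rw [hx, hu, ← Complex.exp_neg, ← Complex.exp_add]; congr 1; ring
  have e3 : Complex.exp (h * (b + m + 1)) = y * u * w := by
    rw [hy, hu, hw, ← Complex.exp_add, ← Complex.exp_add]; congr 1; ring
  have e4 : Complex.exp (h * (b - m)) = y * u⁻¹ := by
    rw [hy, hu, ← Complex.exp_neg, ← Complex.exp_add]; congr 1; ring
  unfold qnum at he
  simp only [Complex.exp_neg, e1, e2, e3, e4, ← hw] at he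
  rw [div_mul_div_comm, div_mul_div_comm] at he
  have hDD : (w - w⁻¹) * (w - w⁻¹) ≠ 0 := mul_ne_zero hd0 hd0
  rw [div_eq_div_iff hDD hDD] at he
  have he' := mul_right_cancel₀ hDD he
  field_simp at he'
  have key' : u ^ 4 * w * ((x ^ 2 - y ^ 2) * (x ^ 2 * y ^ 2 * w ^ 2 - 1)) = 0 := by
    linear_combination u ^ 2 * w * he'
  have key : (x ^ 2 - y ^ 2) * (x ^ 2 * y ^ 2 * w ^ 2 - 1) = 0 := by
    rcases mul_eq_zero.mp key' with hk | hk
    · exact absurd hk (mul_ne_zero (pow_ne_zero _ hu0) hw0)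
    · exact hk
  rcases mul_eq_zero.mp key with hk | hk
  · apply h1
    have ex2 : Complex.exp (h * (2 * a - 2 * b)) * y ^ 2 = x ^ 2 := by
      rw [hx, hy, sq, sq, ← Complex.exp_add, ← Complex.exp_add, ← Complex.exp_add]
      congr 1; ring
    rw [sub_eq_zero] at hk
    have : Complex.exp (h * (2 * a - 2 * b)) * y ^ 2 = 1 * y ^ 2 := by
      rw [ex2, hk, one_mul]
    exact mul_right_cancel₀ (pow_ne_zero _ hy0) this
  · apply h2
    have ex2 : Complex.exp (h * (2 * a + 2 * b + 2)) = x ^ 2 * y ^ 2 * w ^ 2 := by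
      rw [hx, hy, hw, sq, sq, sq]
      rw [show h * (2 * a + 2 * b + 2) = h * a + h * a + (h * b + h * b) + (h + h) by ring]
      simp only [Complex.exp_add]
    rw [sub_eq_zero] at hk
    rw [ex2, hk]

end Stmt17

theorem stmt_17 (h : ℂ) (hh : ∀ r' : ℚ, h ≠ 2 * Real.pi * Complex.I * r')
    (p r ℓ₀ m₀ : ℂ)
    (hm : ∀ k : ℤ, qpow h (2 * m₀ + k) ≠ -1)
    (hl1 : ∀ k : ℤ, qpow h (2 * ℓ₀ + 2 * k) ≠ 1)
    (hl2 : ∀ k : ℤ, qpow h (4 * ℓ₀ + 2 * k) ≠ 1)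
    (hg1 : ∀ k : ℤ, qpow h (2 * p + 2 * ℓ₀ + 2 * k) ≠ 1)
    (hg2 : ∀ k : ℤ, qpow h (2 * p - 2 * ℓ₀ + 2 * k) ≠ 1)
    (hg3 : ∀ k : ℤ, qpow h (2 * ℓ₀ + 2 * r + 2 * k) ≠ 1)
    (hg4 : ∀ k : ℤ, qpow h (2 * ℓ₀ - 2 * r + 2 * k) ≠ 1)
    (hg5 : ∀ k : ℤ, qpow h (2 * ℓ₀ + 2 * m₀ + 2 * k) ≠ 1)
    (hg6 : ∀ k : ℤ, qpow h (2 * ℓ₀ - 2 * m₀ + 2 * k) ≠ 1)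
    (I21 I32 I43 : Module.End ℂ (ℤ × ℤ →₀ ℂ))
    (hI21 : ∀ j k : ℤ, I21 (Finsupp.single (j, k) 1) =
      (Complex.I * qnum h (m₀ + k)) • Finsupp.single (j, k) 1)
    (hI32 : ∀ j k : ℤ, I32 (Finsupp.single (j, k) 1) =
      coefA h (ℓ₀ + j) (m₀ + k) • Finsupp.single (j, k + 1) 1
        - Finsupp.single (j, k - 1) 1)
    (hI43 : ∀ j k : ℤ, I43 (Finsupp.single (j, k) 1) =
      coefB h p r (ℓ₀ + j) (m₀ + k) • Finsupp.single (j + 1, k) 1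
        - qnum h ((ℓ₀ + j) - (m₀ + k)) • Finsupp.single (j - 1, k) 1
        + (Complex.I * coefC h p r (ℓ₀ + j) (m₀ + k)) • Finsupp.single (j, k) 1)
    (U : Submodule ℂ (ℤ × ℤ →₀ ℂ))
    (hU21 : ∀ v ∈ U, I21 v ∈ U) (hU32 : ∀ v ∈ U, I32 v ∈ U)
    (hU43 : ∀ v ∈ U, I43 v ∈ U) :
    U = ⊥ ∨ U = ⊤ := by
  classical
  -- abbreviations
  have hAne : ∀ j k : ℤ, coefA h (ℓ₀ + j) (m₀ + k) ≠ 0 := by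
    intro j k
    unfold coefA
    apply div_ne_zero
    · apply mul_ne_zero
      · apply Stmt17.qnum_ne_zero h hh
        have := hg5 (j + k + 1); unfold qpow at this
        rw [show h * (2 * (ℓ₀ + (j:ℂ) + (m₀ + (k:ℂ)) + 1))
            = h * (2 * ℓ₀ + 2 * m₀ + 2 * ((j + k + 1 : ℤ) : ℂ)) by push_cast; ring]
        exact this
      · apply Stmt17.qnum_ne_zero h hh
        have := hg6 (j - k); unfold qpow at this
        rw [show h * (2 * (ℓ₀ + (j:ℂ) - (m₀ + (k:ℂ))))
            = h * (2 * ℓ₀ - 2 * m₀ + 2 * ((j - k : ℤ) : ℂ)) by push_cast; ring]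
        exact this
    · apply mul_ne_zero
      · unfold qpow
        rw [show h * (-(m₀ + (k:ℂ))) = -(h * (m₀ + (k:ℂ))) by ring]
        apply Stmt17.cosh_ne_zero h
        have := hm (2 * k); unfold qpow at this
        rw [show h * (2 * (m₀ + (k:ℂ))) = h * (2 * m₀ + ((2 * k : ℤ) : ℂ)) by push_cast; ring]
        exact this
      · unfold qpow
        rw [show h * (-(m₀ + (k:ℂ) + 1)) = -(h * (m₀ + (k:ℂ) + 1)) by ring]
        apply Stmt17.cosh_ne_zero h
        have := hm (2 * k + 2); unfold qpow at this
        rw [show h * (2 * (m₀ + (k:ℂ) + 1)) = h * (2 * m₀ + ((2 * k + 2 : ℤ) : ℂ)) by push_cast; ring]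
        exact this
  have hμne : ∀ k k' : ℤ, k ≠ k' →
      Complex.I * qnum h (m₀ + k) ≠ Complex.I * qnum h (m₀ + k') := by
    intro k k' hk heq
    have := mul_left_cancel₀ Complex.I_ne_zero heq
    refine Stmt17.qnum_ne h hh (m₀ + k) (m₀ + k') ?_ ?_ this
    · have hker := Stmt17.exp_int_ne_one h hh (k - k') (by omega)
      rw [show h * (m₀ + (k:ℂ) - (m₀ + (k':ℂ))) = h * ((k - k' : ℤ) : ℂ) by push_cast; ring]
      exact hker
    · have := hm (k + k'); unfold qpow at this
      rw [show h * (m₀ + (k:ℂ) + (m₀ + (k':ℂ))) = h * (2 * m₀ + ((k + k' : ℤ) : ℂ)) by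
        push_cast; ring]
      exact this
  have hDen : ∀ k : ℤ, (qpow h (m₀ + (k:ℂ)) + qpow h (-(m₀ + (k:ℂ)))) *
      (qpow h (m₀ + (k:ℂ) + 1) + qpow h (-(m₀ + (k:ℂ) + 1))) ≠ 0 := by
    intro k
    apply mul_ne_zero
    · unfold qpow
      rw [show h * (-(m₀ + (k:ℂ))) = -(h * (m₀ + (k:ℂ))) by ring]
      apply Stmt17.cosh_ne_zero h
      have := hm (2 * k); unfold qpow at this
      rw [show h * (2 * (m₀ + (k:ℂ))) = h * (2 * m₀ + ((2 * k : ℤ) : ℂ)) by push_cast; ring]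
      exact this
    · unfold qpow
      rw [show h * (-(m₀ + (k:ℂ) + 1)) = -(h * (m₀ + (k:ℂ) + 1)) by ring]
      apply Stmt17.cosh_ne_zero h
      have := hm (2 * k + 2); unfold qpow at this
      rw [show h * (2 * (m₀ + (k:ℂ) + 1)) = h * (2 * m₀ + ((2 * k + 2 : ℤ) : ℂ)) by
        push_cast; ring]
      exact this
  have hADist : ∀ (k j j' : ℤ), j ≠ j' →
      coefA h (ℓ₀ + j) (m₀ + k) ≠ coefA h (ℓ₀ + j') (m₀ + k) := by
    intro k j j' hjj heq
    unfold coefA at heq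
    rw [div_eq_div_iff (hDen k) (hDen k)] at heq
    have heq2 := mul_right_cancel₀ (hDen k) heq
    refine Stmt17.qnum_prod_ne h hh (ℓ₀ + j) (ℓ₀ + j') (m₀ + k) ?_ ?_ heq2
    · have := Stmt17.exp_int_ne_one h hh (2 * (j - j')) (by omega)
      rw [show h * (2 * (ℓ₀ + (j:ℂ)) - 2 * (ℓ₀ + (j':ℂ)))
          = h * ((2 * (j - j') : ℤ) : ℂ) by push_cast; ring]
      exact this
    · have := hl2 (j + j' + 1); unfold qpow at this
      rw [show h * (2 * (ℓ₀ + (j:ℂ)) + 2 * (ℓ₀ + (j':ℂ)) + 2)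
          = h * (4 * ℓ₀ + 2 * ((j + j' + 1 : ℤ) : ℂ)) by push_cast; ring]
      exact this
  have hBne : ∀ j k : ℤ, coefB h p r (ℓ₀ + j) (m₀ + k) ≠ 0 := by
    intro j k
    unfold coefB
    apply div_ne_zero
    · apply mul_ne_zero
      apply mul_ne_zero
      apply mul_ne_zero
      apply mul_ne_zero
      · apply Stmt17.qnum_ne_zero h hh
        have := hg1 (j + 2); unfold qpow at this
        rw [show h * (2 * (p + (ℓ₀ + (j:ℂ)) + 2))
            = h * (2 * p + 2 * ℓ₀ + 2 * ((j + 2 : ℤ) : ℂ)) by push_cast; ring]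
        exact this
      · apply Stmt17.qnum_ne_zero h hh
        have := hg2 (-j); unfold qpow at this
        rw [show h * (2 * (p - (ℓ₀ + (j:ℂ))))
            = h * (2 * p - 2 * ℓ₀ + 2 * ((-j : ℤ) : ℂ)) by push_cast; ring]
        exact this
      · apply Stmt17.qnum_ne_zero h hh
        have := hg3 (j + 1); unfold qpow at this
        rw [show h * (2 * (ℓ₀ + (j:ℂ) + r + 1))
            = h * (2 * ℓ₀ + 2 * r + 2 * ((j + 1 : ℤ) : ℂ)) by push_cast; ring]
        exact this
      · apply Stmt17.qnum_ne_zero h hh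
        have := hg4 (j + 1); unfold qpow at this
        rw [show h * (2 * (ℓ₀ + (j:ℂ) - r + 1))
            = h * (2 * ℓ₀ - 2 * r + 2 * ((j + 1 : ℤ) : ℂ)) by push_cast; ring]
        exact this
      · apply Stmt17.qnum_ne_zero h hh
        have := hg5 (j + k + 1); unfold qpow at this
        rw [show h * (2 * (ℓ₀ + (j:ℂ) + (m₀ + (k:ℂ)) + 1))
            = h * (2 * ℓ₀ + 2 * m₀ + 2 * ((j + k + 1 : ℤ) : ℂ)) by push_cast; ring]
        exact this
    · apply mul_ne_zero
      apply mul_ne_zero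
      · apply pow_ne_zero
        apply Stmt17.qnum_ne_zero h hh
        have := hl1 (j + 1); unfold qpow at this
        rw [show h * (2 * (ℓ₀ + (j:ℂ) + 1)) = h * (2 * ℓ₀ + 2 * ((j + 1 : ℤ) : ℂ)) by
          push_cast; ring]
        exact this
      · apply Stmt17.qnum_ne_zero h hh
        have := hl2 (2 * j + 1); unfold qpow at this
        rw [show h * (2 * (2 * (ℓ₀ + (j:ℂ)) + 1))
            = h * (4 * ℓ₀ + 2 * ((2 * j + 1 : ℤ) : ℂ)) by push_cast; ring]
        exact this
      · apply Stmt17.qnum_ne_zero h hh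
        have := hl2 (2 * j + 3); unfold qpow at this
        rw [show h * (2 * (2 * (ℓ₀ + (j:ℂ)) + 3))
            = h * (4 * ℓ₀ + 2 * ((2 * j + 3 : ℤ) : ℂ)) by push_cast; ring]
        exact this
  have hGne : ∀ j k : ℤ, qnum h ((ℓ₀ + (j:ℂ)) - (m₀ + (k:ℂ))) ≠ 0 := by
    intro j k
    apply Stmt17.qnum_ne_zero h hh
    have := hg6 (j - k); unfold qpow at this
    rw [show h * (2 * (ℓ₀ + (j:ℂ) - (m₀ + (k:ℂ))))
        = h * (2 * ℓ₀ - 2 * m₀ + 2 * ((j - k : ℤ) : ℂ)) by push_cast; ring]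
    exact this
  have coord21 : ∀ (v : ℤ × ℤ →₀ ℂ) (b : ℤ × ℤ),
      I21 v b = (Complex.I * qnum h (m₀ + b.2)) * v b := by
    intro v
    induction v using Finsupp.induction_linear with
    | zero => intro b; simp
    | add f g hf hg =>
      intro b
      rw [map_add, Finsupp.add_apply, Finsupp.add_apply, hf, hg]
      ring
    | single a c =>
      intro b
      obtain ⟨j, k⟩ := a
      rw [show (Finsupp.single ((j, k) : ℤ × ℤ) c) = c • Finsupp.single ((j, k) : ℤ × ℤ) (1:ℂ) by
        rw [Finsupp.smul_single', mul_one], map_smul, hI21 j k]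
      simp only [Finsupp.smul_apply, Finsupp.single_apply, smul_eq_mul]
      by_cases hb : ((j, k) : ℤ × ℤ) = b
      · subst hb; simp; ring
      · simp [hb]
  have coord32 : ∀ (v : ℤ × ℤ →₀ ℂ) (b : ℤ × ℤ),
      I32 v b = coefA h (ℓ₀ + b.1) (m₀ + (b.2 - 1 : ℤ)) * v (b.1, b.2 - 1) - v (b.1, b.2 + 1) := by
    intro v
    induction v using Finsupp.induction_linear with
    | zero => intro b; simp
    | add f g hf hg =>
      intro b
      rw [map_add, Finsupp.add_apply, Finsupp.add_apply, Finsupp.add_apply, hf, hg]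
      ring
    | single a c =>
      intro b
      obtain ⟨j, k⟩ := a
      obtain ⟨b1, b2⟩ := b
      rw [show (Finsupp.single ((j, k) : ℤ × ℤ) c) = c • Finsupp.single ((j, k) : ℤ × ℤ) (1:ℂ) by
        rw [Finsupp.smul_single', mul_one], map_smul, hI32 j k]
      simp only [Finsupp.smul_apply, Finsupp.sub_apply, Finsupp.smul_apply,
        Finsupp.single_apply, Prod.mk.injEq, smul_eq_mul]
      by_cases h1 : j = b1
      · subst h1
        by_cases h2 : k = b2 - 1
        · subst h2
          rw [show b2 - 1 + 1 = b2 from by omega]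
          simp only [if_pos rfl, show ¬(b2 - 1 - 1 = b2) from by omega, if_false,
            show ¬(b2 - 1 = b2 + 1) from by omega, and_true, and_false]
          push_cast
          ring
        · by_cases h3 : k = b2 + 1
          · subst h3
            simp [show ¬(b2 + 1 + 1 = b2) from by omega,
              show ¬(b2 + 1 = b2 - 1) from by omega]
          · simp [show ¬(k + 1 = b2) from by omega, show ¬(k - 1 = b2) from by omega,
              h2, h3]
      · simp [h1]
  have isolate : ∀ n : ℕ, ∀ v : ℤ × ℤ →₀ ℂ, v.support.card ≤ n → v ∈ U →
      ∀ k₀ j₁ : ℤ, (∀ b : ℤ × ℤ, b.2 ≠ k₀ → v b = 0) → v (j₁, k₀) ≠ 0 →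
      Finsupp.single ((j₁, k₀) : ℤ × ℤ) (1:ℂ) ∈ U := by
    intro n
    induction n with
    | zero =>
      intro v hcard _ k₀ j₁ _ hj₁
      exfalso
      have hv0 : v = 0 := by
        rw [← Finsupp.support_eq_empty]
        exact Finset.card_eq_zero.mp (Nat.le_zero.mp hcard)
      rw [hv0] at hj₁; simp at hj₁
    | succ n ih =>
      intro v hcard hvU k₀ j₁ hrow hj₁
      by_cases hex : ∃ j₂, j₂ ≠ j₁ ∧ v (j₂, k₀) ≠ 0
      · obtain ⟨j₂, hne, hj₂⟩ := hex
        set w1 := I32 v with hw1def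
        set w2 := I21 w1 - (Complex.I * qnum h (m₀ + ((k₀ - 1 : ℤ) : ℂ))) • w1 with hw2def
        set w3 := I32 w2 with hw3def
        set w4 := I21 w3 - (Complex.I * qnum h (m₀ + ((k₀ + 2 : ℤ) : ℂ))) • w3 with hw4def
        have hw1U : w1 ∈ U := hU32 v hvU
        have hw2U : w2 ∈ U := sub_mem (hU21 _ hw1U) (Submodule.smul_mem _ _ hw1U)
        have hw3U : w3 ∈ U := hU32 _ hw2U
        have hw4U : w4 ∈ U := sub_mem (hU21 _ hw3U) (Submodule.smul_mem _ _ hw3U)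
        have hw2c : ∀ b : ℤ × ℤ, w2 b = (Complex.I * qnum h (m₀ + (b.2 : ℂ))
            - Complex.I * qnum h (m₀ + ((k₀ - 1 : ℤ) : ℂ))) * w1 b := by
          intro b
          rw [hw2def, Finsupp.sub_apply, Finsupp.smul_apply, coord21, smul_eq_mul]
          ring
        have hw4c : ∀ b : ℤ × ℤ, w4 b = (Complex.I * qnum h (m₀ + (b.2 : ℂ))
            - Complex.I * qnum h (m₀ + ((k₀ + 2 : ℤ) : ℂ))) * w3 b := by
          intro b
          rw [hw4def, Finsupp.sub_apply, Finsupp.smul_apply, coord21, smul_eq_mul]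
          ring
        have hw1row : ∀ b : ℤ × ℤ, b.2 ≠ k₀ + 1 → b.2 ≠ k₀ - 1 → w1 b = 0 := by
          intro b hb1 hb2
          rw [hw1def, coord32, hrow (b.1, b.2 - 1) (by show b.2 - 1 ≠ k₀; omega),
            hrow (b.1, b.2 + 1) (by show b.2 + 1 ≠ k₀; omega)]
          ring
        have hw2row : ∀ b : ℤ × ℤ, b.2 ≠ k₀ + 1 → w2 b = 0 := by
          intro b hb
          rw [hw2c]
          by_cases hb2 : b.2 = k₀ - 1
          · rw [hb2]; ring
          · rw [hw1row b hb hb2, mul_zero]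
        have hw3row : ∀ b : ℤ × ℤ, b.2 ≠ k₀ → b.2 ≠ k₀ + 2 → w3 b = 0 := by
          intro b hb1 hb2
          rw [hw3def, coord32, hw2row (b.1, b.2 - 1) (by show b.2 - 1 ≠ k₀ + 1; omega),
            hw2row (b.1, b.2 + 1) (by show b.2 + 1 ≠ k₀ + 1; omega)]
          ring
        have hw4row : ∀ b : ℤ × ℤ, b.2 ≠ k₀ → w4 b = 0 := by
          intro b hb
          rw [hw4c]
          by_cases hb2 : b.2 = k₀ + 2
          · rw [hb2]; ring
          · rw [hw3row b hb hb2, mul_zero]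
        set c := -((Complex.I * qnum h (m₀ + (k₀ : ℂ)) - Complex.I * qnum h (m₀ + ((k₀ + 2 : ℤ) : ℂ)))
            * (Complex.I * qnum h (m₀ + ((k₀ + 1 : ℤ) : ℂ)) - Complex.I * qnum h (m₀ + ((k₀ - 1 : ℤ) : ℂ)))) with hc
        have hcne : c ≠ 0 := by
          rw [hc]
          apply neg_ne_zero.mpr
          exact mul_ne_zero (sub_ne_zero.mpr (hμne k₀ (k₀ + 2) (by omega)))
            (sub_ne_zero.mpr (hμne (k₀ + 1) (k₀ - 1) (by omega)))
        have hw4val : ∀ j : ℤ, w4 (j, k₀)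
            = c * (coefA h (ℓ₀ + (j : ℂ)) (m₀ + (k₀ : ℂ)) * v (j, k₀)) := by
          intro j
          have e1 : w1 (j, k₀ + 1) = coefA h (ℓ₀ + (j : ℂ)) (m₀ + (k₀ : ℂ)) * v (j, k₀) := by
            have h1 := coord32 v (j, k₀ + 1)
            rw [← hw1def] at h1
            rw [show ((j, k₀ + 1) : ℤ × ℤ).2 - 1 = k₀ from by omega] at h1
            rw [show ((j, k₀ + 1) : ℤ × ℤ).2 + 1 = k₀ + 2 from by omega] at h1
            rw [h1, hrow (((j, k₀ + 1) : ℤ × ℤ).1, k₀ + 2) (by show k₀ + 2 ≠ k₀; omega)]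
            ring
          have e2 : w2 (j, k₀ + 1) = (Complex.I * qnum h (m₀ + ((k₀ + 1 : ℤ) : ℂ))
              - Complex.I * qnum h (m₀ + ((k₀ - 1 : ℤ) : ℂ))) * w1 (j, k₀ + 1) := by
            have := hw2c (j, k₀ + 1)
            rw [show (((j, k₀ + 1) : ℤ × ℤ).2 : ℂ) = ((k₀ + 1 : ℤ) : ℂ) from rfl] at this
            exact this
          have e3 : w3 (j, k₀) = -(w2 (j, k₀ + 1)) := by
            have h3 := coord32 w2 (j, k₀)
            rw [← hw3def] at h3
            rw [show ((j, k₀) : ℤ × ℤ).2 - 1 = k₀ - 1 from rfl,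
              show ((j, k₀) : ℤ × ℤ).2 + 1 = k₀ + 1 from rfl] at h3
            rw [h3, hw2row (((j, k₀) : ℤ × ℤ).1, k₀ - 1) (by show k₀ - 1 ≠ k₀ + 1; omega)]
            ring
          have e4 : w4 (j, k₀) = (Complex.I * qnum h (m₀ + (k₀ : ℂ))
              - Complex.I * qnum h (m₀ + ((k₀ + 2 : ℤ) : ℂ))) * w3 (j, k₀) := hw4c (j, k₀)
          rw [e4, e3, e2, e1, hc]
          ring
        set w5 := w4 - (c * coefA h (ℓ₀ + (j₂ : ℂ)) (m₀ + (k₀ : ℂ))) • v with hw5def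
        have hw5U : w5 ∈ U := sub_mem hw4U (Submodule.smul_mem _ _ hvU)
        have hw5row : ∀ b : ℤ × ℤ, b.2 ≠ k₀ → w5 b = 0 := by
          intro b hb
          rw [hw5def, Finsupp.sub_apply, Finsupp.smul_apply, hw4row b hb, hrow b hb,
            smul_eq_mul, mul_zero, sub_zero]
        have hw5val : ∀ j : ℤ, w5 (j, k₀) = c * (coefA h (ℓ₀ + (j : ℂ)) (m₀ + (k₀ : ℂ))
            - coefA h (ℓ₀ + (j₂ : ℂ)) (m₀ + (k₀ : ℂ))) * v (j, k₀) := by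
          intro j
          rw [hw5def, Finsupp.sub_apply, Finsupp.smul_apply, hw4val j, smul_eq_mul]
          ring
        have hw5j1 : w5 (j₁, k₀) ≠ 0 := by
          rw [hw5val]
          exact mul_ne_zero (mul_ne_zero hcne
            (sub_ne_zero.mpr (hADist k₀ j₁ j₂ (Ne.symm hne)))) hj₁
        have hsupp : w5.support ⊆ v.support.erase ((j₂, k₀) : ℤ × ℤ) := by
          intro b hb
          rw [Finsupp.mem_support_iff] at hb
          rw [Finset.mem_erase, Finsupp.mem_support_iff]
          constructor
          · intro heq
            apply hb
            rw [heq, hw5val j₂, sub_self, mul_zero, zero_mul]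
          · intro hvb0
            apply hb
            obtain ⟨b1, b2⟩ := b
            by_cases hbk : b2 = k₀
            · subst hbk
              rw [hw5val b1, hvb0, mul_zero]
            · exact hw5row (b1, b2) hbk
        have hcard5 : w5.support.card ≤ n := by
          have h2 : ((j₂, k₀) : ℤ × ℤ) ∈ v.support := Finsupp.mem_support_iff.mpr hj₂
          have hle := Finset.card_le_card hsupp
          rw [Finset.card_erase_of_mem h2] at hle
          omega
        exact ih w5 hcard5 hw5U k₀ j₁ hw5row hw5j1
      · push_neg at hex
        set cv := v (j₁, k₀) with hcv
        have hv : v = cv • Finsupp.single ((j₁, k₀) : ℤ × ℤ) (1:ℂ) := by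
          ext b
          obtain ⟨b1, b2⟩ := b
          rw [Finsupp.smul_apply, Finsupp.single_apply, smul_eq_mul]
          by_cases hb : ((j₁, k₀) : ℤ × ℤ) = (b1, b2)
          · rw [if_pos hb, mul_one]
            cases hb
            rfl
          · rw [if_neg hb, mul_zero]
            by_cases hbk : b2 = k₀
            · subst hbk
              apply hex b1
              intro heq
              apply hb
              rw [heq]
            · exact hrow (b1, b2) hbk
        have hmem := U.smul_mem cv⁻¹ hvU
        rw [hv, smul_smul, inv_mul_cancel₀ hj₁, one_smul] at hmem
        exact hmem
  have reduce : ∀ n : ℕ, ∀ v : ℤ × ℤ →₀ ℂ, v.support.card ≤ n → v ∈ U → v ≠ 0 →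
      ∃ a : ℤ × ℤ, Finsupp.single a (1:ℂ) ∈ U := by
    intro n
    induction n with
    | zero =>
      intro v hcard _ hv0
      exfalso
      apply hv0
      rw [← Finsupp.support_eq_empty]
      exact Finset.card_eq_zero.mp (Nat.le_zero.mp hcard)
    | succ n ih =>
      intro v hcard hvU hv0
      obtain ⟨b₀, hb₀⟩ := Finsupp.ne_iff.mp hv0
      rw [Finsupp.coe_zero, Pi.zero_apply] at hb₀
      by_cases hex : ∃ b₁ : ℤ × ℤ, b₁.2 ≠ b₀.2 ∧ v b₁ ≠ 0
      · obtain ⟨b₁, hne, hb₁⟩ := hex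
        set w := I21 v - (Complex.I * qnum h (m₀ + (b₁.2 : ℂ))) • v with hwdef
        have hwU : w ∈ U := sub_mem (hU21 v hvU) (Submodule.smul_mem _ _ hvU)
        have hwc : ∀ b : ℤ × ℤ, w b = (Complex.I * qnum h (m₀ + (b.2 : ℂ))
            - Complex.I * qnum h (m₀ + (b₁.2 : ℂ))) * v b := by
          intro b
          rw [hwdef, Finsupp.sub_apply, Finsupp.smul_apply, coord21, smul_eq_mul]
          ring
        have hwb₀ : w b₀ ≠ 0 := by
          rw [hwc]
          exact mul_ne_zero (sub_ne_zero.mpr (hμne b₀.2 b₁.2 (Ne.symm hne))) hb₀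
        have hw0 : w ≠ 0 := by
          intro e
          apply hwb₀
          rw [e, Finsupp.coe_zero, Pi.zero_apply]
        have hsupp : w.support ⊆ v.support.erase b₁ := by
          intro b hb
          rw [Finsupp.mem_support_iff] at hb
          rw [Finset.mem_erase, Finsupp.mem_support_iff]
          constructor
          · intro heq
            apply hb
            rw [heq, hwc, sub_self, zero_mul]
          · intro hvb0
            apply hb
            rw [hwc, hvb0, mul_zero]
        have hcardw : w.support.card ≤ n := by
          have h2 : b₁ ∈ v.support := Finsupp.mem_support_iff.mpr hb₁
          have hle := Finset.card_le_card hsupp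
          rw [Finset.card_erase_of_mem h2] at hle
          omega
        exact ih w hcardw hwU hw0
      · push_neg at hex
        refine ⟨(b₀.1, b₀.2), isolate v.support.card v le_rfl hvU b₀.2 b₀.1 hex ?_⟩
        rw [Prod.mk.eta]
        exact hb₀
  have moveDown : ∀ j k : ℤ, Finsupp.single ((j, k) : ℤ × ℤ) (1:ℂ) ∈ U →
      Finsupp.single ((j, k - 1) : ℤ × ℤ) (1:ℂ) ∈ U := by
    intro j k hs
    set w := I32 (Finsupp.single ((j, k) : ℤ × ℤ) (1:ℂ)) with hwdef
    have hwU : w ∈ U := hU32 _ hs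
    have hwc : ∀ b : ℤ × ℤ, w b
        = coefA h (ℓ₀ + (j : ℂ)) (m₀ + (k : ℂ)) * (Finsupp.single ((j, k + 1) : ℤ × ℤ) (1:ℂ)) b
          - (Finsupp.single ((j, k - 1) : ℤ × ℤ) (1:ℂ)) b := by
      intro b
      rw [hwdef, hI32 j k, Finsupp.sub_apply, Finsupp.smul_apply, smul_eq_mul]
    set w2 := I21 w - (Complex.I * qnum h (m₀ + ((k + 1 : ℤ) : ℂ))) • w with hw2def
    have hw2U : w2 ∈ U := sub_mem (hU21 _ hwU) (Submodule.smul_mem _ _ hwU)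
    have hw2c : ∀ b : ℤ × ℤ, w2 b = (Complex.I * qnum h (m₀ + (b.2 : ℂ))
        - Complex.I * qnum h (m₀ + ((k + 1 : ℤ) : ℂ))) * w b := by
      intro b
      rw [hw2def, Finsupp.sub_apply, Finsupp.smul_apply, coord21, smul_eq_mul]
      ring
    have hrowi : ∀ b : ℤ × ℤ, b.2 ≠ k - 1 → w2 b = 0 := by
      intro b hb
      rw [hw2c]
      by_cases hb2 : b.2 = k + 1
      · rw [hb2]; ring
      · obtain ⟨b1, b2⟩ := b
        rw [hwc, Finsupp.single_apply, Finsupp.single_apply,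
          if_neg (by intro e; rw [Prod.ext_iff] at e; exact hb2 e.2.symm),
          if_neg (by intro e; rw [Prod.ext_iff] at e; exact hb (e.2.symm))]
        ring
    have hval : w2 (j, k - 1) ≠ 0 := by
      rw [hw2c, hwc, Finsupp.single_apply, Finsupp.single_apply,
        if_neg (by intro e; rw [Prod.ext_iff] at e; omega), if_pos rfl]
      rw [show ((((j, k - 1) : ℤ × ℤ).2 : ℤ) : ℂ) = ((k - 1 : ℤ) : ℂ) from rfl]
      rw [mul_zero, zero_sub, mul_neg, mul_one, neg_ne_zero]
      exact sub_ne_zero.mpr (hμne (k - 1) (k + 1) (by omega))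
    exact isolate w2.support.card w2 le_rfl hw2U (k - 1) j hrowi hval
  have moveUp : ∀ j k : ℤ, Finsupp.single ((j, k) : ℤ × ℤ) (1:ℂ) ∈ U →
      Finsupp.single ((j, k + 1) : ℤ × ℤ) (1:ℂ) ∈ U := by
    intro j k hs
    set w := I32 (Finsupp.single ((j, k) : ℤ × ℤ) (1:ℂ)) with hwdef
    have hwU : w ∈ U := hU32 _ hs
    have hwc : ∀ b : ℤ × ℤ, w b
        = coefA h (ℓ₀ + (j : ℂ)) (m₀ + (k : ℂ)) * (Finsupp.single ((j, k + 1) : ℤ × ℤ) (1:ℂ)) b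
          - (Finsupp.single ((j, k - 1) : ℤ × ℤ) (1:ℂ)) b := by
      intro b
      rw [hwdef, hI32 j k, Finsupp.sub_apply, Finsupp.smul_apply, smul_eq_mul]
    set w2 := I21 w - (Complex.I * qnum h (m₀ + ((k - 1 : ℤ) : ℂ))) • w with hw2def
    have hw2U : w2 ∈ U := sub_mem (hU21 _ hwU) (Submodule.smul_mem _ _ hwU)
    have hw2c : ∀ b : ℤ × ℤ, w2 b = (Complex.I * qnum h (m₀ + (b.2 : ℂ))
        - Complex.I * qnum h (m₀ + ((k - 1 : ℤ) : ℂ))) * w b := by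
      intro b
      rw [hw2def, Finsupp.sub_apply, Finsupp.smul_apply, coord21, smul_eq_mul]
      ring
    have hrowi : ∀ b : ℤ × ℤ, b.2 ≠ k + 1 → w2 b = 0 := by
      intro b hb
      rw [hw2c]
      by_cases hb2 : b.2 = k - 1
      · rw [hb2]; ring
      · obtain ⟨b1, b2⟩ := b
        rw [hwc, Finsupp.single_apply, Finsupp.single_apply,
          if_neg (by intro e; rw [Prod.ext_iff] at e; exact hb (e.2.symm)),
          if_neg (by intro e; rw [Prod.ext_iff] at e; exact hb2 e.2.symm)]
        ring
    have hval : w2 (j, k + 1) ≠ 0 := by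
      rw [hw2c, hwc, Finsupp.single_apply, Finsupp.single_apply, if_pos rfl,
        if_neg (by intro e; rw [Prod.ext_iff] at e; omega)]
      rw [show ((((j, k + 1) : ℤ × ℤ).2 : ℤ) : ℂ) = ((k + 1 : ℤ) : ℂ) from rfl]
      rw [mul_one, sub_zero]
      exact mul_ne_zero (sub_ne_zero.mpr (hμne (k + 1) (k - 1) (by omega))) (hAne j k)
    exact isolate w2.support.card w2 le_rfl hw2U (k + 1) j hrowi hval
  have moveRight : ∀ j k : ℤ, Finsupp.single ((j, k) : ℤ × ℤ) (1:ℂ) ∈ U →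
      Finsupp.single ((j + 1, k) : ℤ × ℤ) (1:ℂ) ∈ U := by
    intro j k hs
    set w := I43 (Finsupp.single ((j, k) : ℤ × ℤ) (1:ℂ)) with hwdef
    have hwU : w ∈ U := hU43 _ hs
    have hwc : ∀ b : ℤ × ℤ, w b
        = coefB h p r (ℓ₀ + (j : ℂ)) (m₀ + (k : ℂ)) * (Finsupp.single ((j + 1, k) : ℤ × ℤ) (1:ℂ)) b
          - qnum h ((ℓ₀ + (j : ℂ)) - (m₀ + (k : ℂ))) * (Finsupp.single ((j - 1, k) : ℤ × ℤ) (1:ℂ)) b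
          + (Complex.I * coefC h p r (ℓ₀ + (j : ℂ)) (m₀ + (k : ℂ))) * (Finsupp.single ((j, k) : ℤ × ℤ) (1:ℂ)) b := by
      intro b
      rw [hwdef, hI43 j k, Finsupp.add_apply, Finsupp.sub_apply, Finsupp.smul_apply,
        Finsupp.smul_apply, Finsupp.smul_apply, smul_eq_mul, smul_eq_mul, smul_eq_mul]
    have hrowi : ∀ b : ℤ × ℤ, b.2 ≠ k → w b = 0 := by
      intro b hb
      obtain ⟨b1, b2⟩ := b
      rw [hwc, Finsupp.single_apply, Finsupp.single_apply, Finsupp.single_apply,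
        if_neg (by intro e; rw [Prod.ext_iff] at e; exact hb (e.2.symm)),
        if_neg (by intro e; rw [Prod.ext_iff] at e; exact hb (e.2.symm)),
        if_neg (by intro e; rw [Prod.ext_iff] at e; exact hb (e.2.symm))]
      ring
    have hval : w (j + 1, k) ≠ 0 := by
      rw [hwc, Finsupp.single_apply, Finsupp.single_apply, Finsupp.single_apply,
        if_pos rfl, if_neg (by intro e; rw [Prod.ext_iff] at e; omega),
        if_neg (by intro e; rw [Prod.ext_iff] at e; omega)]
      rw [mul_one, mul_zero, mul_zero, sub_zero, add_zero]
      exact hBne j k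
    exact isolate w.support.card w le_rfl hwU k (j + 1) hrowi hval
  have moveLeft : ∀ j k : ℤ, Finsupp.single ((j, k) : ℤ × ℤ) (1:ℂ) ∈ U →
      Finsupp.single ((j - 1, k) : ℤ × ℤ) (1:ℂ) ∈ U := by
    intro j k hs
    set w := I43 (Finsupp.single ((j, k) : ℤ × ℤ) (1:ℂ)) with hwdef
    have hwU : w ∈ U := hU43 _ hs
    have hwc : ∀ b : ℤ × ℤ, w b
        = coefB h p r (ℓ₀ + (j : ℂ)) (m₀ + (k : ℂ)) * (Finsupp.single ((j + 1, k) : ℤ × ℤ) (1:ℂ)) b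
          - qnum h ((ℓ₀ + (j : ℂ)) - (m₀ + (k : ℂ))) * (Finsupp.single ((j - 1, k) : ℤ × ℤ) (1:ℂ)) b
          + (Complex.I * coefC h p r (ℓ₀ + (j : ℂ)) (m₀ + (k : ℂ))) * (Finsupp.single ((j, k) : ℤ × ℤ) (1:ℂ)) b := by
      intro b
      rw [hwdef, hI43 j k, Finsupp.add_apply, Finsupp.sub_apply, Finsupp.smul_apply,
        Finsupp.smul_apply, Finsupp.smul_apply, smul_eq_mul, smul_eq_mul, smul_eq_mul]
    have hrowi : ∀ b : ℤ × ℤ, b.2 ≠ k → w b = 0 := by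
      intro b hb
      obtain ⟨b1, b2⟩ := b
      rw [hwc, Finsupp.single_apply, Finsupp.single_apply, Finsupp.single_apply,
        if_neg (by intro e; rw [Prod.ext_iff] at e; exact hb (e.2.symm)),
        if_neg (by intro e; rw [Prod.ext_iff] at e; exact hb (e.2.symm)),
        if_neg (by intro e; rw [Prod.ext_iff] at e; exact hb (e.2.symm))]
      ring
    have hval : w (j - 1, k) ≠ 0 := by
      rw [hwc, Finsupp.single_apply, Finsupp.single_apply, Finsupp.single_apply,
        if_pos rfl, if_neg (by intro e; rw [Prod.ext_iff] at e; omega),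
        if_neg (by intro e; rw [Prod.ext_iff] at e; omega)]
      rw [mul_one, mul_zero, mul_zero, zero_sub, add_zero, neg_ne_zero]
      exact hGne j k
    exact isolate w.support.card w le_rfl hwU k (j - 1) hrowi hval
  have rowAll : ∀ j k j' : ℤ, Finsupp.single ((j, k) : ℤ × ℤ) (1:ℂ) ∈ U →
      Finsupp.single ((j', k) : ℤ × ℤ) (1:ℂ) ∈ U := by
    intro j k j' hs
    have key : ∀ d : ℤ, Finsupp.single ((j + d, k) : ℤ × ℤ) (1:ℂ) ∈ U := by
      intro d
      induction d using Int.induction_on with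
      | zero => simpa using hs
      | succ i ihp =>
        rw [show j + ((i : ℤ) + 1) = (j + (i : ℤ)) + 1 from by ring]
        exact moveRight _ k ihp
      | pred i ihn =>
        rw [show j + (-(i : ℤ) - 1) = (j + (-(i : ℤ))) - 1 from by ring]
        exact moveLeft _ k ihn
    have := key (j' - j)
    rwa [show j + (j' - j) = j' from by ring] at this
  have colAll : ∀ j k k' : ℤ, Finsupp.single ((j, k) : ℤ × ℤ) (1:ℂ) ∈ U →
      Finsupp.single ((j, k') : ℤ × ℤ) (1:ℂ) ∈ U := by
    intro j k k' hs
    have key : ∀ d : ℤ, Finsupp.single ((j, k + d) : ℤ × ℤ) (1:ℂ) ∈ U := by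
      intro d
      induction d using Int.induction_on with
      | zero => simpa using hs
      | succ i ihp =>
        rw [show k + ((i : ℤ) + 1) = (k + (i : ℤ)) + 1 from by ring]
        exact moveUp j _ ihp
      | pred i ihn =>
        rw [show k + (-(i : ℤ) - 1) = (k + (-(i : ℤ))) - 1 from by ring]
        exact moveDown j _ ihn
    have := key (k' - k)
    rwa [show k + (k' - k) = k' from by ring] at this
  rcases eq_or_ne U ⊥ with hbot | hbot
  · exact Or.inl hbot
  right
  obtain ⟨v, hvU, hv0⟩ := (Submodule.ne_bot_iff U).mp hbot
  obtain ⟨a₀, ha₀⟩ := reduce v.support.card v le_rfl hvU hv0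
  obtain ⟨j0, k0⟩ := a₀
  have allS : ∀ a : ℤ × ℤ, Finsupp.single a (1:ℂ) ∈ U := by
    intro a
    obtain ⟨a1, a2⟩ := a
    exact colAll a1 k0 a2 (rowAll j0 k0 a1 ha₀)
  rw [eq_top_iff]
  intro v' _
  rw [← Finsupp.sum_single v']
  apply Submodule.finsuppSum_mem
  intro c _
  rw [show Finsupp.single c (v' c) = (v' c) • Finsupp.single c (1:ℂ) from by
    rw [Finsupp.smul_single', mul_one]]
  exact U.smul_mem _ (allS c)
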